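/- For every real x ≥ some absolute bound (e.g. x ≥ 25), the product of all primes p ≤ e^{x/3} is at least e^{x}. -/

import Mathlib

/-- Downward Bertrand: for `2 ≤ m` there is a prime `p ≤ m` with `m + 1 ≤ 2 * p`. -/
lemma bertrand_down (m : ℕ) (hm : 2 ≤ m) :
    ∃ p, Nat.Prime p ∧ p ≤ m ∧ m + 1 ≤ 2 * p := by
  obtain ⟨p, hp, h1, h2⟩ := Nat.exists_prime_lt_and_le_two_mul (m / 2) (by omega)
  exact ⟨p, hp, by omega, by omega⟩

set_option maxHeartbeats 1000000 in
/-- For every real `x ≥ 25`, the product of all primes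
`p ≤ e^(x/3)` is at least `e^x`. -/
theorem stmt_14 (x : ℝ) (hx : 25 ≤ x) :
    Real.exp x ≤
      ∏ p ∈ Finset.filter Nat.Prime (Finset.range (⌊Real.exp (x / 3)⌋₊ + 1)), (p : ℝ) := by
  set M : ℕ := ⌊Real.exp (x / 3)⌋₊ with hMdef
  set a : ℝ := (M : ℝ) with hadef
  -- lower bound on exp(x/3)
  have hE : (2824 : ℝ) ≤ Real.exp (x / 3) := by
    have h8 : (8 : ℝ) ≤ x / 3 := by linarith
    have : Real.exp 8 ≤ Real.exp (x / 3) := Real.exp_le_exp.mpr h8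
    have he1 : (2.7 : ℝ) ≤ Real.exp 1 := le_of_lt (by
      have := Real.exp_one_gt_d9; linarith)
    have : (2.7 : ℝ) ^ (8 : ℕ) ≤ Real.exp 1 ^ (8 : ℕ) :=
      pow_le_pow_left₀ (by norm_num) he1 8
    have hexp8 : Real.exp 1 ^ (8 : ℕ) = Real.exp 8 := by
      rw [← Real.exp_nat_mul]; norm_num
    nlinarith [this, hexp8]
  have hEle : Real.exp (x / 3) < (M : ℝ) + 1 := Nat.lt_floor_add_one _
  have haE : a ≤ Real.exp (x / 3) := Nat.floor_le (le_of_lt (Real.exp_pos _))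
  have haM : (2823 : ℝ) ≤ a := by linarith
  have hM : (2823 : ℕ) ≤ M := by
    have : ((2823 : ℕ) : ℝ) ≤ (M : ℝ) := by push_cast; linarith
    exact_mod_cast this
  -- build the chain of six primes
  obtain ⟨p6, hp6, h6u, h6l⟩ := bertrand_down M (by omega)
  obtain ⟨p5, hp5, h5u, h5l⟩ := bertrand_down (p6 - 1) (by omega)
  obtain ⟨p4, hp4, h4u, h4l⟩ := bertrand_down (p5 - 1) (by omega)
  obtain ⟨p3, hp3, h3u, h3l⟩ := bertrand_down (p4 - 1) (by omega)
  obtain ⟨p2, hp2, h2u, h2l⟩ := bertrand_down (p3 - 1) (by omega)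
  obtain ⟨p1, hp1, h1u, h1l⟩ := bertrand_down (p2 - 1) (by omega)
  -- the finset of these primes
  set S : Finset ℕ := insert p1 (insert p2 (insert p3 (insert p4 (insert p5 {p6})))) with hSdef
  have hsub : S ⊆ Finset.filter Nat.Prime (Finset.range (M + 1)) := by
    intro q hq
    simp only [hSdef, Finset.mem_insert, Finset.mem_singleton] at hq
    simp only [Finset.mem_filter, Finset.mem_range]
    rcases hq with h | h | h | h | h | h <;> subst h <;>
      exact ⟨by omega, by assumption⟩
  have hpos : 0 < ∏ p ∈ Finset.filter Nat.Prime (Finset.range (M + 1)), p := by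
    apply Finset.prod_pos
    intro q hq
    exact (Nat.prime_of_mem_primesBelow (n := M + 1) (by simpa [Nat.primesBelow] using hq)).pos
  have hdvd : (∏ q ∈ S, q) ∣ ∏ p ∈ Finset.filter Nat.Prime (Finset.range (M + 1)), p :=
    Finset.prod_dvd_prod_of_subset _ _ _ hsub
  have hle : (∏ q ∈ S, q) ≤ ∏ p ∈ Finset.filter Nat.Prime (Finset.range (M + 1)), p :=
    Nat.le_of_dvd hpos hdvd
  have hSprod : (∏ q ∈ S, q) = p1 * (p2 * (p3 * (p4 * (p5 * p6)))) := by
    rw [hSdef]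
    rw [Finset.prod_insert (by simp; omega), Finset.prod_insert (by simp; omega),
      Finset.prod_insert (by simp; omega), Finset.prod_insert (by simp; omega),
      Finset.prod_insert (by simp; omega), Finset.prod_singleton]
  -- real lower bounds on the primes
  have hr6 : a / 2 ≤ (p6 : ℝ) := by
    have : (M : ℝ) + 1 ≤ 2 * (p6 : ℝ) := by exact_mod_cast h6l
    linarith
  have hr5 : a / 4 ≤ (p5 : ℝ) := by
    have : (p6 : ℝ) ≤ 2 * (p5 : ℝ) := by exact_mod_cast (by omega : p6 ≤ 2 * p5)
    linarith
  have hr4 : a / 8 ≤ (p4 : ℝ) := by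
    have h1 : (p5 : ℝ) ≤ 2 * (p4 : ℝ) := by exact_mod_cast (by omega : p5 ≤ 2 * p4)
    linarith
  have hr3 : a / 16 ≤ (p3 : ℝ) := by
    have h1 : (p4 : ℝ) ≤ 2 * (p3 : ℝ) := by exact_mod_cast (by omega : p4 ≤ 2 * p3)
    linarith
  have hr2 : a / 32 ≤ (p2 : ℝ) := by
    have h1 : (p3 : ℝ) ≤ 2 * (p2 : ℝ) := by exact_mod_cast (by omega : p3 ≤ 2 * p2)
    linarith
  have hr1 : a / 64 ≤ (p1 : ℝ) := by
    have h1 : (p2 : ℝ) ≤ 2 * (p1 : ℝ) := by exact_mod_cast (by omega : p2 ≤ 2 * p1)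
    linarith
  -- main estimate
  have hexpx : Real.exp x = Real.exp (x / 3) ^ (3 : ℕ) := by
    rw [← Real.exp_nat_mul]; ring_nf
  have hkey : Real.exp x ≤ (a / 64) * ((a / 32) * ((a / 16) * ((a / 8) * ((a / 4) * (a / 2))))) := by
    rw [hexpx]
    have h1 : Real.exp (x / 3) ^ (3 : ℕ) ≤ (a + 1) ^ (3 : ℕ) := by
      apply pow_le_pow_left₀ (le_of_lt (Real.exp_pos _)) (le_of_lt hEle)
    have ha0 : (0 : ℝ) ≤ a := by linarith
    have hcube : (2823 : ℝ) ^ (3 : ℕ) ≤ a ^ (3 : ℕ) :=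
      pow_le_pow_left₀ (by norm_num) haM 3
    have h2a : (a + 1) ^ (3 : ℕ) ≤ (2 * a) ^ (3 : ℕ) :=
      pow_le_pow_left₀ (by linarith) (by linarith) 3
    have h2b : (2 : ℝ) ^ 24 * a ^ 3 ≤ a ^ 3 * a ^ 3 := by
      have h24 : (2 : ℝ) ^ 24 ≤ a ^ 3 := by
        have : (2 : ℝ) ^ 24 ≤ (2823 : ℝ) ^ (3 : ℕ) := by norm_num
        linarith
      exact mul_le_mul_of_nonneg_right h24 (pow_nonneg ha0 3)
    have h2 : (a + 1) ^ (3 : ℕ) ≤ a ^ 6 / 2 ^ 21 := by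
      have hr : (2 * a) ^ (3 : ℕ) = 8 * a ^ 3 := by ring
      have hr2 : a ^ 3 * a ^ 3 = a ^ 6 := by ring
      have hn : (2 : ℝ) ^ 24 * a ^ 3 = 2 ^ 21 * (8 * a ^ 3) := by ring
      rw [le_div_iff₀ (by norm_num : (0:ℝ) < 2 ^ 21)]
      calc (a + 1) ^ (3:ℕ) * 2 ^ 21 ≤ (2 * a) ^ (3:ℕ) * 2 ^ 21 :=
            mul_le_mul_of_nonneg_right h2a (by norm_num)
        _ = 2 ^ 24 * a ^ 3 := by ring
        _ ≤ a ^ 3 * a ^ 3 := h2b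
        _ = a ^ 6 := by ring
    have h3 : a ^ 6 / 2 ^ 21 = (a / 64) * ((a / 32) * ((a / 16) * ((a / 8) * ((a / 4) * (a / 2))))) := by
      ring
    linarith
  have hprodle : (a / 64) * ((a / 32) * ((a / 16) * ((a / 8) * ((a / 4) * (a / 2))))) ≤
      ((p1 : ℝ) * ((p2 : ℝ) * ((p3 : ℝ) * ((p4 : ℝ) * ((p5 : ℝ) * (p6 : ℝ)))))) := by
    have ha0 : (0 : ℝ) ≤ a := by linarith
    gcongr <;> positivity
  calc Real.exp x ≤ (a / 64) * ((a / 32) * ((a / 16) * ((a / 8) * ((a / 4) * (a / 2))))) := hkey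
    _ ≤ ((p1 : ℝ) * ((p2 : ℝ) * ((p3 : ℝ) * ((p4 : ℝ) * ((p5 : ℝ) * (p6 : ℝ)))))) := hprodle
    _ = ((p1 * (p2 * (p3 * (p4 * (p5 * p6))))) : ℕ) := by push_cast; ring
    _ = ((∏ q ∈ S, q : ℕ) : ℝ) := by rw [hSprod]
    _ ≤ ((∏ p ∈ Finset.filter Nat.Prime (Finset.range (M + 1)), p : ℕ) : ℝ) := by
        exact_mod_cast hle
    _ = ∏ p ∈ Finset.filter Nat.Prime (Finset.range (M + 1)), (p : ℝ) := by push_cast; ring
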